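/- Let Γ be a uniform ranked poset whose maximum element x has rank d+1 (so Γ = Γ_x) with d ≥ 2, and let R = R(Γ). For every 0 ≤ k < d−1, the set {s ∈ R(d−1,k) : r_x·s = 0} equals r_x(1)·R(d−2,k). Equivalently, H^{d−1}(R(·,k), d_Γ) = 0 for all 0 ≤ k < d−1. -/

import Mathlib

set_option linter.unusedSectionVars false
set_option linter.unusedVariables false

open scoped Classical

variable {Γ : Type*} [PartialOrder Γ] [OrderBot Γ] [Fintype Γ]

/-- `rk` is a rank function for the finite poset `Γ` (with least element `⊥`):
the bottom has rank `0` and ranks increase by one along covering relations.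
Equivalently, all maximal chains in `[⊥, x]` have the same length `rk x`. -/
def IsRanked (rk : Γ → ℕ) : Prop :=
  rk ⊥ = 0 ∧ ∀ a b : Γ, a ⋖ b → rk b = rk a + 1

/-- `rankSet rk x n` is the set `S_x(n) = {y ≤ x : rk x - rk y = n}`. -/
def rankSet (rk : Γ → ℕ) (x : Γ) (n : ℕ) : Set Γ := {y | y ≤ x ∧ rk y + n = rk x}

/-- `Γ` is uniform: for each `a`, the equivalence relation on `S_a(1)` generated by
`b ∼ c` whenever `S_b(1) ∩ S_c(1) ≠ ∅` has at most one equivalence class. -/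
def Uniform (rk : Γ → ℕ) : Prop :=
  ∀ a b c : Γ, b ∈ rankSet rk a 1 → c ∈ rankSet rk a 1 →
    Relation.EqvGen
      (fun u v => u ∈ rankSet rk a 1 ∧ v ∈ rankSet rk a 1 ∧
        (rankSet rk u 1 ∩ rankSet rk v 1).Nonempty)
      b c

/-- `Γ' = Γ \ {⊥}`, indexing the generators `r_x`. -/
abbrev Vert (Γ : Type*) [PartialOrder Γ] [OrderBot Γ] := {x : Γ // x ≠ (⊥ : Γ)}

variable (F : Type*) [Field F]

/-- The generator `r_x` of the tensor algebra `T(W)` on the vector space `W` with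
basis `{r_x : x ∈ Γ'}`, realized as the free algebra on `Γ'`. -/
noncomputable def gen (x : Vert Γ) : FreeAlgebra F (Vert Γ) := FreeAlgebra.ι F x

/-- `r_x(n) = Σ_{y ∈ S_x(n)} r_y ∈ W` (which is `0` for `n ≥ rk x`). -/
noncomputable def rxn (rk : Γ → ℕ) (x : Γ) (n : ℕ) : FreeAlgebra F (Vert Γ) :=
  ∑ y ∈ Finset.univ.filter (fun y : Vert Γ => y.1 ∈ rankSet rk x n), gen F y

/-- The quadratic relations spanning `I_2`: `r_x ⊗ r_y` for `y ∉ S_x(1)`, and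
`r_x ⊗ r_x(1)`, for `x, y ∈ Γ'`. -/
inductive GRel (F : Type*) [Field F] {Γ : Type*} [PartialOrder Γ] [OrderBot Γ]
    [Fintype Γ] (rk : Γ → ℕ) :
    FreeAlgebra F (Vert Γ) → FreeAlgebra F (Vert Γ) → Prop
  | mono (x y : Vert Γ) (h : y.1 ∉ rankSet rk x.1 1) : GRel F rk (gen F x * gen F y) 0
  | adj (x : Vert Γ) : GRel F rk (gen F x * rxn F rk x.1 1) 0

/-- The quadratic algebra `R(Γ) = T(W)/I`, where `I` is the two-sided ideal
generated by `I_2`. -/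
abbrev RGamma (rk : Γ → ℕ) := RingQuot (GRel F rk)

/-- The image of `r_x` in `R(Γ)`. -/
noncomputable def rbar (rk : Γ → ℕ) (x : Vert Γ) : RGamma F rk :=
  RingQuot.mkAlgHom F (GRel F rk) (gen F x)

/-- The image of `r_x(n)` in `R(Γ)`. -/
noncomputable def rxnbar (rk : Γ → ℕ) (x : Γ) (n : ℕ) : RGamma F rk :=
  RingQuot.mkAlgHom F (GRel F rk) (rxn F rk x n)

/-- The right ideal `r_x R = {r_x · s : s ∈ R}`, as an `F`-submodule of `R(Γ)`. -/
noncomputable def rIdeal (rk : Γ → ℕ) (x : Vert Γ) : Submodule F (RGamma F rk) :=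
  LinearMap.range (LinearMap.mulLeft F (rbar F rk x))

/-- `H_x(n) = Σ_{y ∈ Γ', y ∉ S_x(n)} r_y R`. -/
noncomputable def Hsub (rk : Γ → ℕ) (x : Γ) (n : ℕ) : Submodule F (RGamma F rk) :=
  ⨆ (y : Vert Γ) (_ : y.1 ∉ rankSet rk x n), rIdeal F rk y

/-- `d_Γ = Σ_{y ∈ Γ'} r_y ∈ R(Γ)`. -/
noncomputable def dGamma (rk : Γ → ℕ) : RGamma F rk := ∑ y : Vert Γ, rbar F rk y

/-- The degree-one component `W` of `T(W)`: the span of the generators `r_x`. -/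
noncomputable def Wsub : Submodule F (FreeAlgebra F (Vert Γ)) :=
  Submodule.span F (Set.range (gen F (Γ := Γ)))

/-- The graded component `R_m` of `R(Γ)`: the image of `W^{⊗m}`. -/
noncomputable def Rcomp (rk : Γ → ℕ) (m : ℕ) : Submodule F (RGamma F rk) :=
  Submodule.map (RingQuot.mkAlgHom F (GRel F rk)).toLinearMap ((Wsub F (Γ := Γ)) ^ m)

/-- The subspace `R(n,k) = Σ_{y ∈ Γ', rk y = n+1} r_y R_{n-k}` of `R(Γ)`. -/
noncomputable def Rnk (rk : Γ → ℕ) (n k : ℕ) : Submodule F (RGamma F rk) :=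
  ⨆ (y : Vert Γ) (_ : rk y.1 = n + 1),
    Submodule.map (LinearMap.mulLeft F (rbar F rk y)) (Rcomp F rk (n - k))

section AuxProof

open Submodule LinearMap Finset

/-- The word basis of the free algebra. -/
noncomputable def bFM : Module.Basis (FreeMonoid (Vert Γ)) F (FreeAlgebra F (Vert Γ)) :=
  FreeAlgebra.basisFreeMonoid F (Vert Γ)

lemma bFM_apply (w : FreeMonoid (Vert Γ)) :
    bFM F w = (FreeAlgebra.equivMonoidAlgebraFreeMonoid (R := F) (X := Vert Γ)).symm
      (MonoidAlgebra.single w (1 : F)) := by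
  simp [bFM, FreeAlgebra.basisFreeMonoid, Module.Basis.map_apply]
  try rfl

lemma bFM_mul (w w' : FreeMonoid (Vert Γ)) :
    bFM F w * bFM F w' = bFM F (w * w') := by
  rw [bFM_apply, bFM_apply, bFM_apply, ← map_mul]
  congr 1
  rw [MonoidAlgebra.single_mul_single, one_mul]

lemma bFM_one : bFM F (1 : FreeMonoid (Vert Γ)) = 1 := by
  rw [bFM_apply]
  have h : (MonoidAlgebra.single (1 : FreeMonoid (Vert Γ)) (1 : F)) =
      (1 : MonoidAlgebra F (FreeMonoid (Vert Γ))) := rfl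
  rw [h]
  try rw [map_one]

lemma bFM_of (z : Vert Γ) : bFM F (FreeMonoid.of z) = gen F z := by
  have h : FreeAlgebra.equivMonoidAlgebraFreeMonoid (R := F) (X := Vert Γ) (gen F z)
      = MonoidAlgebra.single (FreeMonoid.of z) (1 : F) := by
    simp [gen, FreeAlgebra.equivMonoidAlgebraFreeMonoid, MonoidAlgebra.of_apply]
    try rfl
  rw [bFM_apply, ← h, AlgEquiv.symm_apply_apply]

lemma gen_mem_Wsub (z : Vert Γ) : gen F z ∈ Wsub F (Γ := Γ) :=
  Submodule.subset_span ⟨z, rfl⟩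

lemma rxn_mem_Wsub (rk : Γ → ℕ) (x' : Γ) (n : ℕ) : rxn F rk x' n ∈ Wsub F (Γ := Γ) :=
  Submodule.sum_mem _ fun y _ => gen_mem_Wsub F y

/-- Left derivative with respect to the letter `y`. -/
noncomputable def Lder (y : Vert Γ) :
    FreeAlgebra F (Vert Γ) →ₗ[F] FreeAlgebra F (Vert Γ) :=
  (bFM F).constr F fun w =>
    match FreeMonoid.toList w with
    | [] => 0
    | z :: t => if z = y then bFM F (FreeMonoid.ofList t) else 0

lemma Lder_word_cons (y z : Vert Γ) (l : List (Vert Γ)) :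
    Lder F y (bFM F (FreeMonoid.ofList (z :: l))) =
      if z = y then bFM F (FreeMonoid.ofList l) else 0 := by
  rw [Lder, Module.Basis.constr_basis]
  try rfl

lemma Lder_gen_mul (y z : Vert Γ) (T : FreeAlgebra F (Vert Γ)) :
    Lder F y (gen F z * T) = if z = y then T else 0 := by
  have h : (Lder F y) ∘ₗ (LinearMap.mulLeft F (gen F z)) =
      if z = y then (LinearMap.id : FreeAlgebra F (Vert Γ) →ₗ[F] FreeAlgebra F (Vert Γ))
        else 0 := by
    apply Module.Basis.ext (bFM F)
    intro w
    simp only [LinearMap.comp_apply, LinearMap.mulLeft_apply]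
    rw [← bFM_of, bFM_mul]
    have hw : FreeMonoid.of z * w = FreeMonoid.ofList (z :: FreeMonoid.toList w) := rfl
    rw [hw, Lder_word_cons]
    by_cases hzy : z = y
    · simp [hzy, FreeMonoid.ofList_toList]
    · simp [hzy]
  have h2 := LinearMap.congr_fun h T
  simp only [LinearMap.comp_apply, LinearMap.mulLeft_apply] at h2
  rw [h2]
  by_cases hzy : z = y
  · simp [hzy]
  · simp [hzy]

/-- The projection onto words of length `m`. -/
noncomputable def pr (m : ℕ) :
    FreeAlgebra F (Vert Γ) →ₗ[F] FreeAlgebra F (Vert Γ) :=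
  (bFM F).constr F fun w => if (FreeMonoid.toList w).length = m then bFM F w else 0

lemma pr_basis (m : ℕ) (w : FreeMonoid (Vert Γ)) :
    pr F m (bFM F w) = if (FreeMonoid.toList w).length = m then bFM F w else 0 := by
  rw [pr, Module.Basis.constr_basis]

lemma Wpow_eq (m : ℕ) :
    (Wsub F (Γ := Γ)) ^ m = Submodule.span F
      {a | ∃ w : FreeMonoid (Vert Γ), (FreeMonoid.toList w).length = m ∧ a = bFM F w} := by
  induction m with
  | zero =>
    rw [pow_zero, Submodule.one_eq_span]
    congr 1
    ext a
    constructor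
    · rintro rfl
      exact ⟨1, rfl, (bFM_one F).symm⟩
    · rintro ⟨w, hw, rfl⟩
      have hw1 : w = 1 := by
        have h0 := List.length_eq_zero_iff.mp hw
        rw [← FreeMonoid.ofList_toList w, h0]; rfl
      simp [hw1, bFM_one]
  | succ n ih =>
    rw [pow_succ', ih, Wsub, Submodule.span_mul_span]
    apply Submodule.span_eq_span
    · rintro a ⟨_, ⟨z, rfl⟩, _, ⟨w, hw, rfl⟩, rfl⟩
      apply Submodule.subset_span
      refine ⟨FreeMonoid.of z * w, ?_, ?_⟩
      · rw [FreeMonoid.toList_of_mul, List.length_cons, hw]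
      · show gen F z * bFM F w = bFM F (FreeMonoid.of z * w)
        rw [← bFM_of, bFM_mul]
    · rintro a ⟨w, hw, rfl⟩
      rcases hl : FreeMonoid.toList w with _ | ⟨z, t⟩
      · rw [hl] at hw; simp at hw
      · have hwsplit : bFM F w = gen F z * bFM F (FreeMonoid.ofList t) := by
          rw [← bFM_of, bFM_mul]
          congr 1
        rw [hwsplit]
        apply Submodule.subset_span
        refine Set.mul_mem_mul ⟨z, rfl⟩ ⟨FreeMonoid.ofList t, ?_, rfl⟩
        have : (FreeMonoid.toList w).length = t.length + 1 := by rw [hl]; rfl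
        rw [hw] at this
        simpa using this.symm

lemma mem_Wpow_word (w : FreeMonoid (Vert Γ)) :
    bFM F w ∈ (Wsub F (Γ := Γ)) ^ (FreeMonoid.toList w).length := by
  rw [Wpow_eq]
  exact Submodule.subset_span ⟨w, rfl, rfl⟩

lemma pr_of_mem {m : ℕ} {T : FreeAlgebra F (Vert Γ)} (h : T ∈ (Wsub F (Γ := Γ)) ^ m) :
    pr F m T = T := by
  have hle : (Wsub F (Γ := Γ)) ^ m ≤ LinearMap.ker (pr F m - LinearMap.id) := by
    rw [Wpow_eq]
    rw [Submodule.span_le]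
    rintro a ⟨w, hw, rfl⟩
    simp [LinearMap.mem_ker, LinearMap.sub_apply, pr_basis, hw]
  have := hle h
  rw [LinearMap.mem_ker, LinearMap.sub_apply, LinearMap.id_apply, sub_eq_zero] at this
  exact this

lemma pr_zero_of_mem {j m : ℕ} (hjm : j ≠ m) {T : FreeAlgebra F (Vert Γ)}
    (h : T ∈ (Wsub F (Γ := Γ)) ^ j) : pr F m T = 0 := by
  have hle : (Wsub F (Γ := Γ)) ^ j ≤ LinearMap.ker (pr F m) := by
    rw [Wpow_eq, Submodule.span_le]
    rintro a ⟨w, hw, rfl⟩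
    have : (FreeMonoid.toList w).length ≠ m := by omega
    simp [LinearMap.mem_ker, pr_basis, this]
  exact hle h

lemma pr_mem {m : ℕ} (T : FreeAlgebra F (Vert Γ)) : pr F m T ∈ (Wsub F (Γ := Γ)) ^ m := by
  have hle : (⊤ : Submodule F (FreeAlgebra F (Vert Γ))) ≤
      Submodule.comap (pr F m) ((Wsub F (Γ := Γ)) ^ m) := by
    rw [← Module.Basis.span_eq (bFM F), Submodule.span_le]
    rintro a ⟨w, rfl⟩
    simp only [SetLike.mem_coe, Submodule.mem_comap]
    rw [pr_basis]
    by_cases hw : (FreeMonoid.toList w).length = m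
    · rw [if_pos hw, ← hw]; exact mem_Wpow_word F w
    · rw [if_neg hw]; exact Submodule.zero_mem _
  exact hle Submodule.mem_top

lemma Lder_mem_pow (y : Vert Γ) {j : ℕ} {T : FreeAlgebra F (Vert Γ)}
    (h : T ∈ (Wsub F (Γ := Γ)) ^ (j + 1)) : Lder F y T ∈ (Wsub F (Γ := Γ)) ^ j := by
  have hle : (Wsub F (Γ := Γ)) ^ (j + 1) ≤
      Submodule.comap (Lder F y) ((Wsub F (Γ := Γ)) ^ j) := by
    rw [Wpow_eq, Submodule.span_le]
    rintro a ⟨w, hw, rfl⟩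
    simp only [SetLike.mem_coe, Submodule.mem_comap]
    rcases hl : FreeMonoid.toList w with _ | ⟨z, t⟩
    · rw [hl] at hw; simp at hw
    · have hwrw : w = FreeMonoid.ofList (z :: t) := by
        rw [← FreeMonoid.ofList_toList w, hl]
      rw [hwrw, Lder_word_cons]
      by_cases hzy : z = y
      · rw [if_pos hzy]
        have hlen : (FreeMonoid.toList (FreeMonoid.ofList t)).length = j := by
          rw [hl] at hw
          simpa using Nat.succ_injective hw
        rw [← hlen]
        exact mem_Wpow_word F _
      · rw [if_neg hzy]; exact Submodule.zero_mem _
  exact hle h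

lemma pr_mulLeft {v : FreeAlgebra F (Vert Γ)} (hv : v ∈ Wsub F (Γ := Γ)) (j : ℕ) :
    ∀ T : FreeAlgebra F (Vert Γ), pr F (j + 1) (v * T) = v * pr F j T := by
  rw [Wsub] at hv
  induction hv using Submodule.span_induction with
  | mem v hv =>
    obtain ⟨z, rfl⟩ := hv
    intro T
    have h : (pr F (j + 1)) ∘ₗ (LinearMap.mulLeft F (gen F z)) =
        (LinearMap.mulLeft F (gen F z)) ∘ₗ (pr F j) := by
      apply Module.Basis.ext (bFM F)
      intro w
      simp only [LinearMap.comp_apply, LinearMap.mulLeft_apply]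
      rw [← bFM_of, bFM_mul, pr_basis, pr_basis]
      have hlen : (FreeMonoid.toList (FreeMonoid.of z * w)).length =
          (FreeMonoid.toList w).length + 1 := rfl
      rw [hlen]
      by_cases hc : (FreeMonoid.toList w).length = j
      · rw [if_pos (by omega), if_pos hc, bFM_mul]
      · rw [if_neg (by omega), if_neg hc, mul_zero]
    have h2 := LinearMap.congr_fun h T
    simpa only [LinearMap.comp_apply, LinearMap.mulLeft_apply] using h2
  | zero => intro T; simp
  | add a b ha hb iha ihb => intro T; simp [add_mul, iha T, ihb T]
  | smul c a ha iha => intro T; simp [smul_mul_assoc, iha T]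


/-- The `F`-span of `a · u · b` for `u` a defining relation: the degree-wise ideal `I`. -/
noncomputable def Mrel (rk : Γ → ℕ) : Submodule F (FreeAlgebra F (Vert Γ)) :=
  Submodule.span F {a | ∃ w₁ w₂ : FreeMonoid (Vert Γ), ∃ u v : FreeAlgebra F (Vert Γ),
    GRel F rk u v ∧ a = bFM F w₁ * u * bFM F w₂}

lemma Mrel_mul_left (rk : Γ → ℕ) (c : FreeAlgebra F (Vert Γ))
    {T : FreeAlgebra F (Vert Γ)} (h : T ∈ Mrel F rk) : c * T ∈ Mrel F rk := by
  induction h using Submodule.span_induction with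
  | mem a ha =>
    obtain ⟨w₁, w₂, u, v, hu, rfl⟩ := ha
    have hc : c ∈ Submodule.span F (Set.range (bFM F (Γ := Γ))) := by
      rw [Module.Basis.span_eq]; trivial
    induction hc using Submodule.span_induction with
    | mem c hc =>
      obtain ⟨w, rfl⟩ := hc
      refine Submodule.subset_span ⟨w * w₁, w₂, u, v, hu, ?_⟩
      rw [← bFM_mul, ← mul_assoc, ← mul_assoc]
    | zero => rw [zero_mul]; exact Submodule.zero_mem _
    | add a b ha hb iha ihb => rw [add_mul]; exact Submodule.add_mem _ iha ihb
    | smul r a ha iha => rw [smul_mul_assoc]; exact Submodule.smul_mem _ r iha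
  | zero => rw [mul_zero]; exact Submodule.zero_mem _
  | add a b ha hb iha ihb => rw [mul_add]; exact Submodule.add_mem _ iha ihb
  | smul r a ha iha => rw [mul_smul_comm]; exact Submodule.smul_mem _ r iha

lemma Mrel_mul_right (rk : Γ → ℕ) (c : FreeAlgebra F (Vert Γ))
    {T : FreeAlgebra F (Vert Γ)} (h : T ∈ Mrel F rk) : T * c ∈ Mrel F rk := by
  induction h using Submodule.span_induction with
  | mem a ha =>
    obtain ⟨w₁, w₂, u, v, hu, rfl⟩ := ha
    have hc : c ∈ Submodule.span F (Set.range (bFM F (Γ := Γ))) := by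
      rw [Module.Basis.span_eq]; trivial
    induction hc using Submodule.span_induction with
    | mem c hc =>
      obtain ⟨w, rfl⟩ := hc
      refine Submodule.subset_span ⟨w₁, w₂ * w, u, v, hu, ?_⟩
      rw [← bFM_mul, ← mul_assoc]
    | zero => rw [mul_zero]; exact Submodule.zero_mem _
    | add a b ha hb iha ihb => rw [mul_add]; exact Submodule.add_mem _ iha ihb
    | smul r a ha iha => rw [mul_smul_comm]; exact Submodule.smul_mem _ r iha
  | zero => rw [zero_mul]; exact Submodule.zero_mem _
  | add a b ha hb iha ihb => rw [add_mul]; exact Submodule.add_mem _ iha ihb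
  | smul r a ha iha => rw [smul_mul_assoc]; exact Submodule.smul_mem _ r iha

lemma GRel_lhs_mem (rk : Γ → ℕ) {u v : FreeAlgebra F (Vert Γ)} (h : GRel F rk u v) :
    u ∈ (Wsub F (Γ := Γ)) ^ 2 := by
  rw [sq]
  cases h with
  | mono p q hq => exact Submodule.mul_mem_mul (gen_mem_Wsub F p) (gen_mem_Wsub F q)
  | adj p => exact Submodule.mul_mem_mul (gen_mem_Wsub F p) (rxn_mem_Wsub F rk p.1 1)

lemma Mrel_pr (rk : Γ → ℕ) (m : ℕ) {T : FreeAlgebra F (Vert Γ)} (h : T ∈ Mrel F rk) :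
    pr F m T ∈ Mrel F rk := by
  have hle : Mrel F rk ≤ Submodule.comap (pr F m) (Mrel F rk) := by
    rw [Mrel, Submodule.span_le]
    rintro a ⟨w₁, w₂, u, v, hu, rfl⟩
    simp only [SetLike.mem_coe, Submodule.mem_comap]
    have hdeg : bFM F w₁ * u * bFM F w₂ ∈ (Wsub F (Γ := Γ)) ^
        ((FreeMonoid.toList w₁).length + 2 + (FreeMonoid.toList w₂).length) := by
      have h1 := Submodule.mul_mem_mul
        (Submodule.mul_mem_mul (mem_Wpow_word F w₁) (GRel_lhs_mem F rk hu))
        (mem_Wpow_word F w₂)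
      rwa [← pow_add, ← pow_add] at h1
    by_cases hm : (FreeMonoid.toList w₁).length + 2 + (FreeMonoid.toList w₂).length = m
    · rw [hm] at hdeg
      rw [pr_of_mem F hdeg]
      exact Submodule.subset_span ⟨w₁, w₂, u, v, hu, rfl⟩
    · rw [pr_zero_of_mem F hm hdeg]
      exact Submodule.zero_mem _
  exact hle h

lemma mk_GRel_zero (rk : Γ → ℕ) {u v : FreeAlgebra F (Vert Γ)} (h : GRel F rk u v) :
    RingQuot.mkAlgHom F (GRel F rk) u = 0 := by
  have h0 : v = 0 := by cases h <;> rfl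
  have h1 := RingQuot.mkAlgHom_rel F h
  rw [h0, map_zero] at h1
  exact h1

lemma mk_zero_of_Mrel (rk : Γ → ℕ) {T : FreeAlgebra F (Vert Γ)} (h : T ∈ Mrel F rk) :
    RingQuot.mkAlgHom F (GRel F rk) T = 0 := by
  have hle : Mrel F rk ≤ LinearMap.ker (RingQuot.mkAlgHom F (GRel F rk)).toLinearMap := by
    rw [Mrel, Submodule.span_le]
    rintro a ⟨w₁, w₂, u, v, hu, rfl⟩
    simp only [SetLike.mem_coe, LinearMap.mem_ker, AlgHom.toLinearMap_apply]
    rw [map_mul, map_mul, mk_GRel_zero F rk hu, mul_zero, zero_mul]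
  exact hle h

lemma Mrel_of_mk_zero (rk : Γ → ℕ) {T : FreeAlgebra F (Vert Γ)}
    (h : RingQuot.mkAlgHom F (GRel F rk) T = 0) : T ∈ Mrel F rk := by
  have hrel : ∀ a b : FreeAlgebra F (Vert Γ), RingQuot.Rel (GRel F rk) a b →
      a - b ∈ Mrel F rk := by
    intro a b hab
    induction hab with
    | of h =>
      rename_i u v
      have hv : v = 0 := by cases h <;> rfl
      subst hv
      rw [sub_zero]
      refine Submodule.subset_span ⟨1, 1, u, 0, h, ?_⟩
      rw [bFM_one, one_mul, mul_one]
    | add_left h ih =>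
      simpa [add_sub_add_right_eq_sub] using ih
    | mul_left h ih =>
      rw [← sub_mul]; exact Mrel_mul_right F rk _ ih
    | mul_right h ih =>
      rw [← mul_sub]; exact Mrel_mul_left F rk _ ih
  have heqv : Relation.EqvGen (RingQuot.Rel (GRel F rk)) T 0 := by
    have h1 : RingQuot.mkRingHom (GRel F rk) T = RingQuot.mkRingHom (GRel F rk) 0 := by
      rw [← RingQuot.mkAlgHom_coe F]
      show RingQuot.mkAlgHom F (GRel F rk) T = RingQuot.mkAlgHom F (GRel F rk) 0
      rw [h, map_zero]
    rw [RingQuot.mkRingHom_def] at h1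
    simp only [RingHom.coe_mk, MonoidHom.coe_mk, OneHom.coe_mk, RingQuot.mk.injEq] at h1
    exact Quot.eq.mp h1
  have hdiff : ∀ a b : FreeAlgebra F (Vert Γ),
      Relation.EqvGen (RingQuot.Rel (GRel F rk)) a b → a - b ∈ Mrel F rk := by
    intro a b hab
    induction hab with
    | rel a b hab => exact hrel a b hab
    | refl a => rw [sub_self]; exact Submodule.zero_mem _
    | symm a b hab ih => rw [← neg_sub]; exact Submodule.neg_mem _ ih
    | trans a b c hab hbc ih1 ih2 =>
      have := Submodule.add_mem _ ih1 ih2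
      rwa [sub_add_sub_cancel] at this
  have := hdiff T 0 heqv
  rwa [sub_zero] at this

/-- `Σ_{z ∉ S_y(1)} r_z · T(W)` inside the free algebra. -/
noncomputable def Zone (rk : Γ → ℕ) (y : Vert Γ) : Submodule F (FreeAlgebra F (Vert Γ)) :=
  ⨆ (z : Vert Γ) (_ : z.1 ∉ rankSet rk y.1 1),
    LinearMap.range (LinearMap.mulLeft F (gen F z))

/-- `Σ_{z ∉ S_y(1)} r_z T(W) + r_y(1) T(W) + I`. -/
noncomputable def Zy (rk : Γ → ℕ) (y : Vert Γ) : Submodule F (FreeAlgebra F (Vert Γ)) :=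
  Zone F rk y ⊔ LinearMap.range (LinearMap.mulLeft F (rxn F rk y.1 1)) ⊔ Mrel F rk

lemma Lder_Zone (rk : Γ → ℕ) {x' y : Vert Γ} (hy : y.1 ∈ rankSet rk x'.1 1)
    {P : FreeAlgebra F (Vert Γ)} (hP : P ∈ Zone F rk x') : Lder F y P = 0 := by
  have hle : Zone F rk x' ≤ LinearMap.ker (Lder F y) := by
    refine iSup_le fun z => iSup_le fun hz => ?_
    rintro a ⟨t, rfl⟩
    rw [LinearMap.mem_ker, LinearMap.mulLeft_apply, Lder_gen_mul, if_neg]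
    intro hzy
    exact hz (hzy ▸ hy)
  exact hle hP

lemma Lder_Mrel (rk : Γ → ℕ) (y : Vert Γ) {T : FreeAlgebra F (Vert Γ)}
    (h : T ∈ Mrel F rk) : Lder F y T ∈ Zy F rk y := by
  have hle : Mrel F rk ≤ Submodule.comap (Lder F y) (Zy F rk y) := by
    rw [Mrel, Submodule.span_le]
    rintro a ⟨w₁, w₂, u, v, hu, rfl⟩
    simp only [SetLike.mem_coe, Submodule.mem_comap]
    rcases hl : FreeMonoid.toList w₁ with _ | ⟨z, t⟩
    · have hw1 : w₁ = 1 := by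
        rw [← FreeMonoid.ofList_toList w₁, hl]; rfl
      rw [hw1, bFM_one, one_mul]
      cases hu with
      | mono p q hq =>
        rw [mul_assoc, Lder_gen_mul]
        by_cases hp : p = y
        · subst hp
          rw [if_pos rfl]
          apply le_sup_left (α := Submodule F (FreeAlgebra F (Vert Γ)))
          apply le_sup_left (α := Submodule F (FreeAlgebra F (Vert Γ)))
          exact Submodule.mem_iSup_of_mem q (Submodule.mem_iSup_of_mem hq ⟨bFM F w₂, rfl⟩)
        · rw [if_neg hp]; exact Submodule.zero_mem _
      | adj p =>
        rw [mul_assoc, Lder_gen_mul]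
        by_cases hp : p = y
        · subst hp
          rw [if_pos rfl]
          apply le_sup_left (α := Submodule F (FreeAlgebra F (Vert Γ)))
          apply le_sup_right (α := Submodule F (FreeAlgebra F (Vert Γ)))
          exact ⟨bFM F w₂, rfl⟩
        · rw [if_neg hp]; exact Submodule.zero_mem _
    · have hw1 : bFM F w₁ = gen F z * bFM F (FreeMonoid.ofList t) := by
        have h2 : w₁ = FreeMonoid.of z * FreeMonoid.ofList t := by
          rw [← FreeMonoid.ofList_toList w₁, hl]; rfl
        rw [h2, ← bFM_of, bFM_mul]
      rw [hw1, mul_assoc, mul_assoc, Lder_gen_mul]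
      by_cases hz : z = y
      · rw [if_pos hz]
        apply le_sup_right (α := Submodule F (FreeAlgebra F (Vert Γ)))
        rw [← mul_assoc]
        exact Submodule.subset_span ⟨FreeMonoid.ofList t, w₂, u, v, hu, rfl⟩
      · rw [if_neg hz]; exact Submodule.zero_mem _
  exact hle h

lemma Zy_killed (rk : Γ → ℕ) (y : Vert Γ) {e : FreeAlgebra F (Vert Γ)}
    (he : e ∈ Zy F rk y) : RingQuot.mkAlgHom F (GRel F rk) (gen F y * e) = 0 := by
  have hle : Zy F rk y ≤ LinearMap.ker
      ((RingQuot.mkAlgHom F (GRel F rk)).toLinearMap ∘ₗ LinearMap.mulLeft F (gen F y)) := by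
    refine sup_le (sup_le ?_ ?_) ?_
    · refine iSup_le fun z => iSup_le fun hz => ?_
      rintro a ⟨t, rfl⟩
      simp only [LinearMap.mem_ker, LinearMap.comp_apply, LinearMap.mulLeft_apply,
        AlgHom.toLinearMap_apply]
      rw [← mul_assoc, map_mul, mk_GRel_zero F rk (GRel.mono y z hz), zero_mul]
    · rintro a ⟨t, rfl⟩
      simp only [LinearMap.mem_ker, LinearMap.comp_apply, LinearMap.mulLeft_apply,
        AlgHom.toLinearMap_apply]
      rw [← mul_assoc, map_mul, mk_GRel_zero F rk (GRel.adj y), zero_mul]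
    · intro e he
      simp only [LinearMap.mem_ker, LinearMap.comp_apply, LinearMap.mulLeft_apply,
        AlgHom.toLinearMap_apply]
      exact mk_zero_of_Mrel F rk (Mrel_mul_left F rk _ he)
  have := hle he
  simpa only [LinearMap.mem_ker, LinearMap.comp_apply, LinearMap.mulLeft_apply,
    AlgHom.toLinearMap_apply] using this

lemma pr_Zy (rk : Γ → ℕ) (y : Vert Γ) (j : ℕ) {e : FreeAlgebra F (Vert Γ)}
    (he : e ∈ Zy F rk y) : pr F (j + 1) e ∈ Zy F rk y := by
  have hle : Zy F rk y ≤ Submodule.comap (pr F (j + 1)) (Zy F rk y) := by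
    refine sup_le (sup_le ?_ ?_) ?_
    · refine iSup_le fun z => iSup_le fun hz => ?_
      rintro a ⟨t, rfl⟩
      simp only [SetLike.mem_coe, Submodule.mem_comap, LinearMap.mulLeft_apply]
      rw [pr_mulLeft F (gen_mem_Wsub F z) j t]
      apply le_sup_left (α := Submodule F (FreeAlgebra F (Vert Γ)))
      apply le_sup_left (α := Submodule F (FreeAlgebra F (Vert Γ)))
      exact Submodule.mem_iSup_of_mem z (Submodule.mem_iSup_of_mem hz ⟨pr F j t, rfl⟩)
    · rintro a ⟨t, rfl⟩
      simp only [SetLike.mem_coe, Submodule.mem_comap, LinearMap.mulLeft_apply]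
      rw [pr_mulLeft F (rxn_mem_Wsub F rk y.1 1) j t]
      apply le_sup_left (α := Submodule F (FreeAlgebra F (Vert Γ)))
      apply le_sup_right (α := Submodule F (FreeAlgebra F (Vert Γ)))
      exact ⟨pr F j t, rfl⟩
    · intro e he
      simp only [SetLike.mem_coe, Submodule.mem_comap]
      exact le_sup_right (α := Submodule F (FreeAlgebra F (Vert Γ))) (Mrel_pr F rk (j + 1) he)
  exact hle he

lemma decomp_set (s : Finset (Vert Γ)) {T : FreeAlgebra F (Vert Γ)}
    (hT : T ∈ ⨆ (y : Vert Γ) (_ : y ∈ s), LinearMap.range (LinearMap.mulLeft F (gen F y))) :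
    T = ∑ y ∈ s, gen F y * Lder F y T := by
  have hle : (⨆ (y : Vert Γ) (_ : y ∈ s), LinearMap.range (LinearMap.mulLeft F (gen F y)))
      ≤ LinearMap.ker (LinearMap.id -
        ∑ y ∈ s, (LinearMap.mulLeft F (gen F y)) ∘ₗ Lder F y) := by
    refine iSup_le fun y => iSup_le fun hy => ?_
    rintro a ⟨t, rfl⟩
    simp only [LinearMap.mem_ker, LinearMap.sub_apply, LinearMap.id_apply,
      LinearMap.sum_apply, LinearMap.comp_apply, LinearMap.mulLeft_apply]
    rw [sub_eq_zero]
    have hterm : ∀ y' ∈ s, gen F y' * Lder F y' (gen F y * t) =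
        if y = y' then gen F y * t else 0 := by
      intro y' _
      rw [Lder_gen_mul]
      by_cases h : y = y'
      · subst h; simp
      · simp [h]
    rw [Finset.sum_congr rfl hterm, Finset.sum_ite_eq s y (fun _ => gen F y * t), if_pos hy]
  have := hle hT
  simp only [LinearMap.mem_ker, LinearMap.sub_apply, LinearMap.id_apply,
    LinearMap.sum_apply, LinearMap.comp_apply, LinearMap.mulLeft_apply] at this
  rw [sub_eq_zero] at this
  exact this

lemma decomp_univ {j : ℕ} {u : FreeAlgebra F (Vert Γ)}
    (hu : u ∈ (Wsub F (Γ := Γ)) ^ (j + 1)) :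
    u = ∑ z : Vert Γ, gen F z * Lder F z u := by
  have hle : (Wsub F (Γ := Γ)) ^ (j + 1) ≤ LinearMap.ker (LinearMap.id -
      ∑ z : Vert Γ, (LinearMap.mulLeft F (gen F z)) ∘ₗ Lder F z) := by
    rw [Wpow_eq, Submodule.span_le]
    rintro a ⟨w, hw, rfl⟩
    simp only [SetLike.mem_coe, LinearMap.mem_ker, LinearMap.sub_apply, LinearMap.id_apply,
      LinearMap.sum_apply, LinearMap.comp_apply, LinearMap.mulLeft_apply]
    rw [sub_eq_zero]
    rcases hl : FreeMonoid.toList w with _ | ⟨z₀, t⟩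
    · rw [hl] at hw; simp at hw
    · have hwrw : w = FreeMonoid.ofList (z₀ :: t) := by
        rw [← FreeMonoid.ofList_toList w, hl]
      have hterm : ∀ z ∈ Finset.univ (α := Vert Γ), gen F z * Lder F z (bFM F w) =
          if z₀ = z then gen F z * bFM F (FreeMonoid.ofList t) else 0 := by
        intro z _
        rw [hwrw, Lder_word_cons]
        by_cases h : z₀ = z
        · subst h; simp
        · simp [h]
      rw [Finset.sum_congr rfl hterm,
        Finset.sum_ite_eq Finset.univ z₀ (fun z => gen F z * bFM F (FreeMonoid.ofList t)),
        if_pos (Finset.mem_univ z₀)]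
      rw [hwrw, ← bFM_of, bFM_mul]
      rfl
  have := hle hu
  simp only [LinearMap.mem_ker, LinearMap.sub_apply, LinearMap.id_apply,
    LinearMap.sum_apply, LinearMap.comp_apply, LinearMap.mulLeft_apply] at this
  rw [sub_eq_zero] at this
  exact this

/-- The lift of `Rnk` to the free algebra. -/
noncomputable def RnkA (rk : Γ → ℕ) (n k : ℕ) : Submodule F (FreeAlgebra F (Vert Γ)) :=
  ⨆ (y : Vert Γ) (_ : rk y.1 = n + 1),
    Submodule.map (LinearMap.mulLeft F (gen F y)) ((Wsub F (Γ := Γ)) ^ (n - k))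

lemma Rnk_eq_map (rk : Γ → ℕ) (n k : ℕ) :
    Rnk F rk n k = Submodule.map (RingQuot.mkAlgHom F (GRel F rk)).toLinearMap
      (RnkA F rk n k) := by
  rw [Rnk, RnkA, Submodule.map_iSup]
  refine iSup_congr fun y => ?_
  rw [Submodule.map_iSup]
  refine iSup_congr fun hy => ?_
  rw [Rcomp, ← Submodule.map_comp, ← Submodule.map_comp]
  congr 1
  refine LinearMap.ext fun t => ?_
  simp only [LinearMap.comp_apply, LinearMap.mulLeft_apply, AlgHom.toLinearMap_apply]
  rw [rbar, ← map_mul]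

end AuxProof

/-- Lemma 3.7(3).  Let `Γ` be a uniform ranked poset whose
maximum element `x` has rank `d+1` (so `Γ = Γ_x`) with `d ≥ 2`, and `R = R(Γ)`.
For every `0 ≤ k < d−1`, the set `{s ∈ R(d−1,k) : r_x·s = 0}` equals
`r_x(1)·R(d−2,k)`.  Equivalently, `H^{d−1}(R(·,k), d_Γ) = 0` for all
`0 ≤ k < d−1`. -/
theorem cohomology_subtop (rk : Γ → ℕ) (hrk : IsRanked rk) (hU : Uniform rk)
    (d : ℕ) (hd : 2 ≤ d) (x : Vert Γ) (hx : ∀ y : Γ, y ≤ x.1) (hxr : rk x.1 = d + 1) :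
    ∀ k : ℕ, k < d - 1 →
      LinearMap.ker (LinearMap.mulLeft F (rbar F rk x)) ⊓ Rnk F rk (d - 1) k =
        Submodule.map (LinearMap.mulLeft F (rxnbar F rk x.1 1)) (Rnk F rk (d - 2) k) := by
  intro k hk
  have hd2 : 2 ≤ d := hd
  have hSx : ∀ y : Vert Γ, y.1 ∈ rankSet rk x.1 1 ↔ rk y.1 = d := by
    intro y
    constructor
    · intro hm; obtain ⟨-, h2⟩ := hm; omega
    · intro h; exact ⟨hx _, by omega⟩
  set Sx : Finset (Vert Γ) :=
    Finset.univ.filter (fun y : Vert Γ => y.1 ∈ rankSet rk x.1 1) with hSxdef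
  have hrxn : rxn F rk x.1 1 = ∑ y ∈ Sx, gen F y := rfl
  have hrxnbar : rxnbar F rk x.1 1 = ∑ y ∈ Sx, rbar F rk y := by
    rw [rxnbar, hrxn, map_sum]
    simp only [rbar]
  have e2 : (d - 1) - k = (d - 2 - k) + 1 := by omega
  apply le_antisymm
  · -- hard direction
    intro s hs
    obtain ⟨hker, hRnk⟩ := Submodule.mem_inf.mp hs
    rw [Rnk_eq_map] at hRnk
    obtain ⟨T, hT, rfl⟩ := hRnk
    simp only [AlgHom.toLinearMap_apply] at hker ⊢
    rw [LinearMap.mem_ker, LinearMap.mulLeft_apply] at hker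
    have hxT : gen F x * T ∈ Mrel F rk := by
      apply Mrel_of_mk_zero
      rw [map_mul]
      rw [rbar] at hker
      exact hker
    have hRle : RnkA F rk (d - 1) k ≤ (Wsub F (Γ := Γ)) ^ (((d - 1) - k) + 1) := by
      refine iSup_le fun y => iSup_le fun hy => ?_
      rintro a ⟨t, ht, rfl⟩
      simp only [LinearMap.mulLeft_apply]
      rw [pow_succ']
      exact Submodule.mul_mem_mul (gen_mem_Wsub F y) ht
    have hTW : T ∈ (Wsub F (Γ := Γ)) ^ (((d - 1) - k) + 1) := hRle hT
    have hTSx : T ∈ ⨆ (y : Vert Γ) (_ : y ∈ Sx),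
        LinearMap.range (LinearMap.mulLeft F (gen F y)) := by
      have hle : RnkA F rk (d - 1) k ≤ ⨆ (y : Vert Γ) (_ : y ∈ Sx),
          LinearMap.range (LinearMap.mulLeft F (gen F y)) := by
        refine iSup_le fun y => iSup_le fun hy => ?_
        have hySx : y ∈ Sx := by
          rw [hSxdef, Finset.mem_filter]
          exact ⟨Finset.mem_univ _, (hSx y).mpr (by omega)⟩
        exact le_trans LinearMap.map_le_range
          (le_iSup₂ (f := fun (y : Vert Γ) (_ : y ∈ Sx) =>
            LinearMap.range (LinearMap.mulLeft F (gen F y))) y hySx)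
      exact hle hT
    have hTeq := decomp_set F Sx hTSx
    have hTZ : T ∈ Zy F rk x := by
      have hid : Lder F x (gen F x * T) = T := by rw [Lder_gen_mul, if_pos rfl]
      rw [← hid]
      exact Lder_Mrel F rk x hxT
    rw [Zy] at hTZ
    obtain ⟨PQ, hPQ, E, hE, hTsplit⟩ := Submodule.mem_sup.mp hTZ
    obtain ⟨P, hP, Q, hQ, hPQeq⟩ := Submodule.mem_sup.mp hPQ
    obtain ⟨q, rfl⟩ := hQ
    simp only [LinearMap.mulLeft_apply] at hPQeq
    have hTform : T = P + (rxn F rk x.1 1 * q + E) := by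
      rw [← hTsplit, ← hPQeq, add_assoc]
    set u : FreeAlgebra F (Vert Γ) := pr F ((d - 1) - k) q with hudef
    have hstep : ∀ y ∈ Sx, RingQuot.mkAlgHom F (GRel F rk) (gen F y * Lder F y T) =
        RingQuot.mkAlgHom F (GRel F rk) (gen F y * u) := by
      intro y hy
      have hy' : y.1 ∈ rankSet rk x.1 1 := by
        have := hy
        rw [hSxdef, Finset.mem_filter] at this
        exact this.2
      have hLyT : Lder F y T = q + Lder F y E := by
        rw [hTform, map_add, map_add, Lder_Zone F rk hy' hP, zero_add]
        congr 1
        rw [hrxn, Finset.sum_mul, map_sum]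
        have hterm : ∀ w ∈ Sx, Lder F y (gen F w * q) = if w = y then q else 0 := by
          intro w _; rw [Lder_gen_mul]
        rw [Finset.sum_congr rfl hterm, Finset.sum_ite_eq' Sx y (fun _ => q), if_pos hy]
      have hLyTW : Lder F y T ∈ (Wsub F (Γ := Γ)) ^ ((d - 1) - k) :=
        Lder_mem_pow F y hTW
      have hey : Lder F y E ∈ Zy F rk y := Lder_Mrel F rk y hE
      have hprey : pr F ((d - 1) - k) (Lder F y E) ∈ Zy F rk y := by
        rw [e2]
        exact pr_Zy F rk y _ hey
      have hLyT2 : Lder F y T = u + pr F ((d - 1) - k) (Lder F y E) := by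
        conv_lhs => rw [← pr_of_mem F hLyTW, hLyT]
        rw [map_add, hudef]
      rw [hLyT2, mul_add, map_add, Zy_killed F rk y hprey, add_zero]
    have hmkT : RingQuot.mkAlgHom F (GRel F rk) T =
        RingQuot.mkAlgHom F (GRel F rk) (rxn F rk x.1 1 * u) := by
      conv_lhs => rw [hTeq]
      rw [map_sum, Finset.sum_congr rfl hstep, ← map_sum, ← Finset.sum_mul, ← hrxn]
    have hu : u ∈ (Wsub F (Γ := Γ)) ^ ((d - 1) - k) := pr_mem F q
    have huds : u = ∑ z : Vert Γ, gen F z * Lder F z u := by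
      apply decomp_univ F (j := d - 2 - k)
      rw [← e2]
      exact hu
    have huz : ∀ z : Vert Γ, Lder F z u ∈ (Wsub F (Γ := Γ)) ^ (d - 2 - k) := by
      intro z
      apply Lder_mem_pow F z
      rw [← e2]
      exact hu
    set Sd1 : Finset (Vert Γ) :=
      Finset.univ.filter (fun z : Vert Γ => rk z.1 = (d - 2) + 1) with hSd1def
    set wR : RGamma F rk :=
      ∑ z ∈ Sd1, rbar F rk z * RingQuot.mkAlgHom F (GRel F rk) (Lder F z u) with hwRdef
    have hwR : wR ∈ Rnk F rk (d - 2) k := by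
      rw [hwRdef]
      apply Submodule.sum_mem
      intro z hz
      have hz' : rk z.1 = (d - 2) + 1 := by
        have := hz
        rw [hSd1def, Finset.mem_filter] at this
        exact this.2
      apply Submodule.mem_iSup_of_mem z
      apply Submodule.mem_iSup_of_mem hz'
      refine ⟨RingQuot.mkAlgHom F (GRel F rk) (Lder F z u), ⟨Lder F z u, huz z, rfl⟩, ?_⟩
      simp only [LinearMap.mulLeft_apply]
    refine ⟨wR, hwR, ?_⟩
    simp only [LinearMap.mulLeft_apply]
    have hzero : ∀ z : Vert Γ, rk z.1 ≠ (d - 2) + 1 →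
        rxnbar F rk x.1 1 * rbar F rk z = 0 := by
      intro z hz
      rw [hrxnbar, Finset.sum_mul]
      apply Finset.sum_eq_zero
      intro y hy
      have hyd : rk y.1 = d := by
        have := hy
        rw [hSxdef, Finset.mem_filter] at this
        exact (hSx y).mp this.2
      rw [rbar, rbar, ← map_mul]
      apply mk_GRel_zero
      apply GRel.mono
      intro hmem
      obtain ⟨-, h2⟩ := hmem
      omega
    calc rxnbar F rk x.1 1 * wR
        = ∑ z ∈ Sd1, rxnbar F rk x.1 1 *
            (rbar F rk z * RingQuot.mkAlgHom F (GRel F rk) (Lder F z u)) := by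
          rw [hwRdef, Finset.mul_sum]
      _ = ∑ z : Vert Γ, rxnbar F rk x.1 1 *
            (rbar F rk z * RingQuot.mkAlgHom F (GRel F rk) (Lder F z u)) := by
          apply Finset.sum_subset (Finset.subset_univ _)
          intro z _ hz
          have hz' : rk z.1 ≠ (d - 2) + 1 := by
            intro hc
            apply hz
            rw [hSd1def, Finset.mem_filter]
            exact ⟨Finset.mem_univ _, hc⟩
          rw [← mul_assoc, hzero z hz', zero_mul]
      _ = rxnbar F rk x.1 1 * ∑ z : Vert Γ,
            rbar F rk z * RingQuot.mkAlgHom F (GRel F rk) (Lder F z u) := by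
          rw [Finset.mul_sum]
      _ = rxnbar F rk x.1 1 * RingQuot.mkAlgHom F (GRel F rk) u := by
          congr 1
          conv_rhs => rw [huds]
          rw [map_sum]
          refine Finset.sum_congr rfl fun z _ => ?_
          rw [map_mul, ← rbar]
      _ = RingQuot.mkAlgHom F (GRel F rk) (rxn F rk x.1 1 * u) := by
          rw [map_mul, rxnbar]
      _ = RingQuot.mkAlgHom F (GRel F rk) T := hmkT.symm
  · -- easy direction
    refine le_inf ?_ ?_
    · rintro a ⟨w, hw, rfl⟩
      simp only [LinearMap.mem_ker, LinearMap.mulLeft_apply]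
      rw [← mul_assoc]
      have hz : rbar F rk x * rxnbar F rk x.1 1 = 0 := by
        rw [rbar, rxnbar, ← map_mul]
        exact mk_GRel_zero F rk (GRel.adj x)
      rw [hz, zero_mul]
    · have hle : Rnk F rk (d - 2) k ≤ Submodule.comap
          (LinearMap.mulLeft F (rxnbar F rk x.1 1)) (Rnk F rk (d - 1) k) := by
        refine iSup_le fun z => iSup_le fun hz => ?_
        rintro a ⟨t', ht', rfl⟩
        obtain ⟨t, ht, rfl⟩ := ht'
        simp only [Submodule.mem_comap, LinearMap.mulLeft_apply, AlgHom.toLinearMap_apply]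
        rw [hrxnbar, Finset.sum_mul]
        apply Submodule.sum_mem
        intro y hy
        have hyd : rk y.1 = (d - 1) + 1 := by
          have hmem := hy
          rw [hSxdef, Finset.mem_filter] at hmem
          have := (hSx y).mp hmem.2
          omega
        apply Submodule.mem_iSup_of_mem y
        apply Submodule.mem_iSup_of_mem hyd
        refine ⟨RingQuot.mkAlgHom F (GRel F rk) (gen F z * t), ⟨gen F z * t, ?_, rfl⟩, ?_⟩
        · rw [e2, pow_succ']
          exact Submodule.mul_mem_mul (gen_mem_Wsub F z) ht
        · simp only [LinearMap.mulLeft_apply, AlgHom.toLinearMap_apply]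
          rw [map_mul, ← rbar]
      rintro a ⟨w, hw, rfl⟩
      exact hle hw
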